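/- Let M be a proper geodesic metric space satisfying the CN inequality (i.e., a proper CAT(0) space), let γ be a geodesic ray in M, and let g, h : M → M be surjective isometries such that g ∘ γ and h ∘ γ are each asymptotic to γ. Define χ(g) := β_γ(g(γ(0))) and χ(h) := β_γ(h(γ(0))). Then (g ∘ h) ∘ γ is asymptotic to γ and χ(g ∘ h) = χ(g) + χ(h); that is, g ↦ χ(g) is an additive homomorphism from the group of surjective isometries fixing the end of γ to ℝ. -/

import Mathlib

open Metric Filter Set

/-- A geodesic ray in a metric space: an isometric embedding of `[0,∞)`,
modelled as a map `ℝ → M` that is isometric on nonnegative reals. -/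
def IsGeodesicRay {M : Type*} [MetricSpace M] (γ : ℝ → M) : Prop :=
  ∀ s t : ℝ, 0 ≤ s → 0 ≤ t → dist (γ s) (γ t) = |s - t|

/-- The Busemann function of a geodesic ray:
`β_γ(b) = sup_{t ≥ 0} (t − d(b, γ(t)))`. -/
noncomputable def busemann {M : Type*} [MetricSpace M] (γ : ℝ → M) (b : M) : ℝ :=
  sSup {x : ℝ | ∃ t : ℝ, 0 ≤ t ∧ x = t - dist b (γ t)}

/-- The (closed) horoball of `γ` at level `s`: `{p | β_γ(p) ≥ s}`. -/
def horoball {M : Type*} [MetricSpace M] (γ : ℝ → M) (s : ℝ) : Set M :=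
  {p : M | s ≤ busemann γ p}

/-- `M` is a geodesic metric space: any two points are joined by a geodesic segment. -/
def IsGeodesicSpace (M : Type*) [MetricSpace M] : Prop :=
  ∀ a b : M, ∃ σ : ℝ → M, σ 0 = a ∧ σ (dist a b) = b ∧
    ∀ s t : ℝ, s ∈ Set.Icc 0 (dist a b) → t ∈ Set.Icc 0 (dist a b) →
      dist (σ s) (σ t) = |s - t|

/-- The CN (Bruhat–Tits) inequality; a geodesic space satisfying it is CAT(0). -/
def CNInequality (M : Type*) [MetricSpace M] : Prop :=
  ∀ x y z m : M, dist y m = dist y z / 2 → dist m z = dist y z / 2 →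
    dist x m ^ 2 ≤ dist x y ^ 2 / 2 + dist x z ^ 2 / 2 - dist y z ^ 2 / 4

/-- Two geodesic rays are asymptotic if they stay at bounded distance. -/
def AsymptoticRays {M : Type*} [MetricSpace M] (γ γ' : ℝ → M) : Prop :=
  ∃ r : ℝ, ∀ t : ℝ, 0 ≤ t → dist (γ t) (γ' t) ≤ r

section Aux

variable {M : Type*} [MetricSpace M] {γ : ℝ → M}

private lemma busSet_nonempty (b : M) :
    Set.Nonempty {x : ℝ | ∃ t : ℝ, 0 ≤ t ∧ x = t - dist b (γ t)} :=
  ⟨0 - dist b (γ 0), 0, le_rfl, rfl⟩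

private lemma busSet_bddAbove (hγ : IsGeodesicRay γ) (b : M) :
    BddAbove {x : ℝ | ∃ t : ℝ, 0 ≤ t ∧ x = t - dist b (γ t)} := by
  refine ⟨dist (γ 0) b, ?_⟩
  rintro x ⟨t, ht, rfl⟩
  have h1 : dist (γ 0) (γ t) = t := by
    rw [hγ 0 t le_rfl ht, zero_sub, abs_neg, abs_of_nonneg ht]
  have h2 := dist_triangle (γ 0) b (γ t)
  linarith

private lemma le_bus (hγ : IsGeodesicRay γ) (b : M) {t : ℝ} (ht : 0 ≤ t) :
    t - dist b (γ t) ≤ busemann γ b :=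
  le_csSup (busSet_bddAbove hγ b) ⟨t, ht, rfl⟩

private lemma bus_le (b : M) {c : ℝ} (h : ∀ t, 0 ≤ t → t - dist b (γ t) ≤ c) :
    busemann γ b ≤ c :=
  csSup_le (busSet_nonempty b) (by rintro x ⟨t, ht, rfl⟩; exact h t ht)

private lemma bus_lip (hγ : IsGeodesicRay γ) (x y : M) :
    busemann γ y ≤ busemann γ x + dist x y := by
  apply bus_le
  intro t ht
  have h1 := dist_triangle x y (γ t)
  have h2 := le_bus hγ x ht
  linarith [dist_triangle x y (γ t), abs_nonneg (1:ℝ)]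

private lemma bus_gamma (hγ : IsGeodesicRay γ) {s : ℝ} (hs : 0 ≤ s) :
    busemann γ (γ s) = s := by
  apply le_antisymm
  · apply bus_le
    intro t ht
    rw [hγ s t hs ht]
    have := neg_abs_le (s - t)
    linarith
  · have := le_bus hγ (γ s) hs
    rw [dist_self] at this
    linarith

private lemma exists_near (hγ : IsGeodesicRay γ) (b : M) {ε : ℝ} (hε : 0 < ε) :
    ∃ t, 0 ≤ t ∧ busemann γ b - ε < t - dist b (γ t) := by
  have hlt : busemann γ b - ε < sSup {x : ℝ | ∃ t : ℝ, 0 ≤ t ∧ x = t - dist b (γ t)} := by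
    show busemann γ b - ε < busemann γ b
    linarith
  obtain ⟨x, hx, hxlt⟩ := exists_lt_of_lt_csSup (busSet_nonempty b) hlt
  obtain ⟨t, ht, rfl⟩ := hx
  exact ⟨t, ht, hxlt⟩

private lemma term_mono (hγ : IsGeodesicRay γ) (b : M) {T T' : ℝ} (hT : 0 ≤ T) (h : T ≤ T') :
    T - dist b (γ T) ≤ T' - dist b (γ T') := by
  have h1 := dist_triangle b (γ T) (γ T')
  have h2 : dist (γ T) (γ T') = T' - T := by
    rw [hγ T T' hT (le_trans hT h), abs_of_nonpos (by linarith)]; ring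
  linarith

/-- Four-point quadrilateral inequality in a geodesic space satisfying CN. -/
private lemma fourpoint (hgeo : IsGeodesicSpace M) (hCN : CNInequality M)
    (A B A' B' : M) :
    dist A B' ^ 2 + dist A' B ^ 2 ≤
      dist A A' ^ 2 + dist A B ^ 2 + dist A' B' ^ 2 + dist B B' ^ 2 := by
  obtain ⟨σ, h0, h1, hiso⟩ := hgeo A B'
  set d := dist A B' with hd
  have hdnn : 0 ≤ d := dist_nonneg
  have hmem0 : (0:ℝ) ∈ Set.Icc 0 d := ⟨le_rfl, hdnn⟩
  have hmemh : d/2 ∈ Set.Icc 0 d := ⟨by linarith, by linarith⟩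
  have hmemd : d ∈ Set.Icc 0 d := ⟨hdnn, le_rfl⟩
  set m := σ (d/2) with hm
  have hAm : dist A m = d / 2 := by
    rw [← h0]
    rw [hiso 0 (d/2) hmem0 hmemh, zero_sub, abs_neg, abs_of_nonneg (by linarith)]
  have hmB : dist m B' = d / 2 := by
    rw [← h1]
    rw [hiso (d/2) d hmemh hmemd, abs_of_nonpos (by linarith)]
    ring
  have e1 := hCN A' A B' m hAm hmB
  have e2 := hCN B A B' m hAm hmB
  have tri : dist A' B ≤ dist A' m + dist m B := dist_triangle A' m B
  have tsq : dist A' B ^ 2 ≤ (dist A' m + dist m B) ^ 2 := by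
    have := dist_nonneg (x := A') (y := B)
    nlinarith [dist_nonneg (x := A') (y := m), dist_nonneg (x := m) (y := B)]
  have hc1 : dist A' A = dist A A' := dist_comm _ _
  have hc2 : dist B A = dist A B := dist_comm _ _
  have hc3 : dist B m = dist m B := dist_comm _ _
  rw [hc1] at e1
  rw [hc2, hc3] at e2
  nlinarith [sq_nonneg (dist A' m - dist m B)]

/-- Midpoint concavity of the Busemann function along a geodesic ray. -/
private lemma bus_concave (hγ : IsGeodesicRay γ) (hCN : CNInequality M)
    {σ : ℝ → M} (hσ : IsGeodesicRay σ) {t : ℝ} (ht : 0 ≤ t) :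
    (busemann γ (σ 0) + busemann γ (σ (2*t))) / 2 ≤ busemann γ (σ t) := by
  refine le_of_forall_pos_le_add ?_
  intro ε hε
  obtain ⟨T₁, hT₁, h1⟩ := exists_near hγ (σ 0) hε
  obtain ⟨T₂, hT₂, h2⟩ := exists_near hγ (σ (2*t)) hε
  set T := max T₁ T₂ with hT
  have hTnn : 0 ≤ T := le_trans hT₁ (le_max_left _ _)
  have h1' : busemann γ (σ 0) - ε < T - dist (σ 0) (γ T) :=
    lt_of_lt_of_le h1 (term_mono hγ _ hT₁ (le_max_left _ _))
  have h2' : busemann γ (σ (2*t)) - ε < T - dist (σ (2*t)) (γ T) :=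
    lt_of_lt_of_le h2 (term_mono hγ _ hT₂ (le_max_right _ _))
  have h2t : (0:ℝ) ≤ 2*t := by linarith
  have e0 : dist (σ 0) (σ (2*t)) = 2*t := by
    rw [hσ 0 (2*t) le_rfl h2t, zero_sub, abs_neg, abs_of_nonneg h2t]
  have ey : dist (σ 0) (σ t) = dist (σ 0) (σ (2*t)) / 2 := by
    rw [e0, hσ 0 t le_rfl ht, zero_sub, abs_neg, abs_of_nonneg ht]; ring
  have ez : dist (σ t) (σ (2*t)) = dist (σ 0) (σ (2*t)) / 2 := by
    rw [e0, hσ t (2*t) ht h2t, abs_of_nonpos (by linarith)]; ring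
  have key := hCN (γ T) (σ 0) (σ (2*t)) (σ t) ey ez
  rw [e0] at key
  have tri1 : dist (γ T) (σ (2*t)) ≤ dist (γ T) (σ 0) + 2*t := by
    have := dist_triangle (γ T) (σ 0) (σ (2*t))
    rw [e0] at this; linarith
  have tri2 : dist (γ T) (σ 0) ≤ dist (γ T) (σ (2*t)) + 2*t := by
    have := dist_triangle (γ T) (σ (2*t)) (σ 0)
    rw [dist_comm (σ (2*t)) (σ 0), e0] at this; linarith
  have hD : dist (γ T) (σ t) ≤ (dist (γ T) (σ 0) + dist (γ T) (σ (2*t))) / 2 := by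
    nlinarith [key, tri1, tri2, dist_nonneg (x := γ T) (y := σ t),
      dist_nonneg (x := γ T) (y := σ 0), dist_nonneg (x := γ T) (y := σ (2*t))]
  have hfinal := le_bus hγ (σ t) hTnn
  rw [dist_comm (σ 0) (γ T)] at h1'
  rw [dist_comm (σ (2*t)) (γ T)] at h2'
  rw [dist_comm (σ t) (γ T)] at hfinal
  linarith

/-- Along a ray asymptotic to `γ`, the Busemann function grows at least linearly. -/
private lemma bus_ray_ge (hγ : IsGeodesicRay γ) (hCN : CNInequality M)
    {σ : ℝ → M} (hσ : IsGeodesicRay σ) {r : ℝ}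
    (hr : ∀ s, 0 ≤ s → dist (σ s) (γ s) ≤ r) {t : ℝ} (ht : 0 ≤ t) :
    t + busemann γ (σ 0) ≤ busemann γ (σ t) := by
  set c := busemann γ (σ t) - t - busemann γ (σ 0) with hc
  suffices hcy : 0 ≤ c by
    rw [hc] at hcy; linarith
  by_contra hneg
  push_neg at hneg
  have H : ∀ n : ℕ, busemann γ (σ (2^n * t)) - 2^n * t ≤ busemann γ (σ 0) + 2^n * c := by
    intro n
    induction n with
    | zero => simp; linarith [hc]
    | succ n ih =>
      have h2t : (0:ℝ) ≤ 2^n * t := by positivity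
      have hcon := bus_concave hγ hCN hσ h2t
      rw [show (2:ℝ)^(n+1) * t = 2 * (2^n * t) by ring,
          show (2:ℝ)^(n+1) * c = 2 * (2^n * c) by ring]
      linarith [ih, hcon]
  have lower : ∀ n : ℕ, -r ≤ busemann γ (σ (2^n * t)) - 2^n * t := by
    intro n
    have h2t : (0:ℝ) ≤ 2^n * t := by positivity
    have hb := le_bus hγ (σ (2^n * t)) h2t
    have hd := hr (2^n * t) h2t
    linarith
  obtain ⟨n, hn⟩ := exists_nat_gt ((busemann γ (σ 0) + r) / (-c))
  have hn2 : (n : ℝ) ≤ 2^n := by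
    have := Nat.lt_two_pow_self (n := n)
    exact_mod_cast this.le
  have hcpos : 0 < -c := by linarith
  have hlt : busemann γ (σ 0) + r < 2^n * (-c) := by
    have := (div_lt_iff₀ hcpos).1 (lt_of_lt_of_le hn hn2)
    linarith
  linarith [H n, lower n]

/-- Superadditivity: `β(b) + β(a γ0) ≤ β(a b)` for an end-fixing isometry `a`. -/
private lemma chi_super (hγ : IsGeodesicRay γ) (hCN : CNInequality M)
    {a : M → M} (hai : Isometry a) {r : ℝ}
    (har : ∀ s, 0 ≤ s → dist (a (γ s)) (γ s) ≤ r) (b : M) :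
    busemann γ b + busemann γ (a (γ 0)) ≤ busemann γ (a b) := by
  have hσ : IsGeodesicRay (fun s => a (γ s)) := by
    intro s t hs htt
    rw [hai.dist_eq, hγ s t hs htt]
  refine le_of_forall_pos_le_add ?_
  intro ε hε
  obtain ⟨t, ht, hnear⟩ := exists_near hγ b hε
  have hM := bus_ray_ge hγ hCN hσ (r := r) har ht
  have hL : busemann γ (a (γ t)) ≤ busemann γ (a b) + dist b (γ t) := by
    have := bus_lip hγ (a b) (a (γ t))
    rwa [hai.dist_eq] at this
  linarith

set_option maxHeartbeats 800000 in
/-- `β(a γ0) + β(a⁻¹ γ0) ≥ 0` for an end-fixing isometry with right inverse. -/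
private lemma chi_inv (hγ : IsGeodesicRay γ) (hgeo : IsGeodesicSpace M)
    (hCN : CNInequality M) {a a' : M → M}
    (hai : Isometry a) (haa' : ∀ x, a (a' x) = x) {r : ℝ}
    (har : ∀ s, 0 ≤ s → dist (a (γ s)) (γ s) ≤ r) :
    0 ≤ busemann γ (a (γ 0)) + busemann γ (a' (γ 0)) := by
  have hr0 : 0 ≤ r := le_trans dist_nonneg (har 0 le_rfl)
  set S := busemann γ (a (γ 0)) + busemann γ (a' (γ 0)) with hS
  have key : ∀ u : ℝ, 0 < u → (-S) * u ≤ r^2 := by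
    intro u hu
    set p := dist (γ 0) (a (γ u)) with hp
    set q := dist (a (γ 0)) (γ u) with hq
    have hunn : 0 ≤ u := hu.le
    have hq1 : u - q ≤ busemann γ (a (γ 0)) := by
      have := le_bus hγ (a (γ 0)) hunn
      rw [← hq] at this; exact this
    have hpe : dist (a' (γ 0)) (γ u) = p := by
      calc dist (a' (γ 0)) (γ u) = dist (a (a' (γ 0))) (a (γ u)) := (hai.dist_eq _ _).symm
        _ = dist (γ 0) (a (γ u)) := by rw [haa']
        _ = p := hp.symm
    have hp1 : u - p ≤ busemann γ (a' (γ 0)) := by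
      have := le_bus hγ (a' (γ 0)) hunn
      rw [hpe] at this; exact this
    have four := fourpoint hgeo hCN (γ 0) (γ u) (a (γ 0)) (a (γ u))
    have d1 : dist (γ 0) (γ u) = u := by
      rw [hγ 0 u le_rfl hunn, zero_sub, abs_neg, abs_of_nonneg hunn]
    have d2 : dist (a (γ 0)) (a (γ u)) = u := by rw [hai.dist_eq, d1]
    have d3 : dist (γ 0) (a (γ 0)) ≤ r := by
      rw [dist_comm]; exact har 0 le_rfl
    have d4 : dist (γ u) (a (γ u)) ≤ r := by
      rw [dist_comm]; exact har u hunn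
    have d3sq : dist (γ 0) (a (γ 0)) ^ 2 ≤ r ^ 2 := by
      nlinarith [dist_nonneg (x := γ 0) (y := a (γ 0))]
    have d4sq : dist (γ u) (a (γ u)) ^ 2 ≤ r ^ 2 := by
      nlinarith [dist_nonneg (x := γ u) (y := a (γ u))]
    have hpq : p^2 + q^2 ≤ 2*u^2 + 2*r^2 := by
      rw [hp, hq]
      nlinarith [four, d1, d2, d3sq, d4sq]
    have hpnn : 0 ≤ p := dist_nonneg
    have hqnn : 0 ≤ q := dist_nonneg
    have husq : u * (p + q) ≤ 2*u^2 + r^2 := by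
      have h2a : u^2 * (p^2 + q^2) ≤ u^2 * (2*u^2 + 2*r^2) :=
        mul_le_mul_of_nonneg_left hpq (sq_nonneg u)
      have h2 : (u * (p + q))^2 ≤ (2*u^2 + r^2)^2 := by
        have hx := mul_nonneg (sq_nonneg u) (sq_nonneg (p - q))
        have hy := sq_nonneg (r^2)
        nlinarith [h2a, hx, hy]
      have hxnn : 0 ≤ u * (p + q) := mul_nonneg hunn (add_nonneg hpnn hqnn)
      have hynn : (0:ℝ) ≤ 2*u^2 + r^2 := by positivity
      nlinarith [h2, hxnn, hynn]
    have hlow' : -S ≤ (p + q) - 2*u := by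
      rw [hS]; linarith
    have hml : u * (-S) ≤ u * ((p + q) - 2*u) := mul_le_mul_of_nonneg_left hlow' hunn
    have : u * ((p + q) - 2*u) = u * (p + q) - 2*u^2 := by ring
    rw [this] at hml
    linarith [hml, husq]
  by_contra hcon
  push_neg at hcon
  have hx : 0 < -S := by linarith
  have := key ((r^2 + 1) / (-S)) (by positivity)
  rw [mul_div_cancel₀ _ (ne_of_gt hx)] at this
  linarith

end Aux

/-- `g ↦ χ(g) := β_γ(g(γ(0)))` is additive on surjective
isometries fixing the end of `γ`. -/
theorem busemann_character_additive {M : Type*} [MetricSpace M] [ProperSpace M]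
    (hgeo : IsGeodesicSpace M) (hCN : CNInequality M)
    (γ : ℝ → M) (hγ : IsGeodesicRay γ)
    (g h : M → M) (hgs : Function.Surjective g) (hgi : Isometry g)
    (hhs : Function.Surjective h) (hhi : Isometry h)
    (hga : AsymptoticRays (g ∘ γ) γ) (hha : AsymptoticRays (h ∘ γ) γ) :
    AsymptoticRays ((g ∘ h) ∘ γ) γ ∧
    busemann γ ((g ∘ h) (γ 0)) = busemann γ (g (γ 0)) + busemann γ (h (γ 0)) := by
  obtain ⟨rg, hrg⟩ := hga
  obtain ⟨rh, hrh⟩ := hha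
  have hrg' : ∀ t, 0 ≤ t → dist (g (γ t)) (γ t) ≤ rg := fun t ht => hrg t ht
  have hrh' : ∀ t, 0 ≤ t → dist (h (γ t)) (γ t) ≤ rh := fun t ht => hrh t ht
  -- inverses
  choose g' hgg' using hgs
  choose h' hhh' using hhs
  have hg'i : Isometry g' := Isometry.of_dist_eq (fun x y => by
    calc dist (g' x) (g' y) = dist (g (g' x)) (g (g' y)) := (hgi.dist_eq _ _).symm
      _ = dist x y := by rw [hgg', hgg'])
  have hh'i : Isometry h' := Isometry.of_dist_eq (fun x y => by
    calc dist (h' x) (h' y) = dist (h (h' x)) (h (h' y)) := (hhi.dist_eq _ _).symm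
      _ = dist x y := by rw [hhh', hhh'])
  have hrgi : ∀ t, 0 ≤ t → dist (g' (γ t)) (γ t) ≤ rg := by
    intro t ht
    calc dist (g' (γ t)) (γ t) = dist (g (g' (γ t))) (g (γ t)) := (hgi.dist_eq _ _).symm
      _ = dist (γ t) (g (γ t)) := by rw [hgg']
      _ = dist (g (γ t)) (γ t) := dist_comm _ _
      _ ≤ rg := hrg' t ht
  have hrhi : ∀ t, 0 ≤ t → dist (h' (γ t)) (γ t) ≤ rh := by
    intro t ht
    calc dist (h' (γ t)) (γ t) = dist (h (h' (γ t))) (h (γ t)) := (hhi.dist_eq _ _).symm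
      _ = dist (γ t) (h (γ t)) := by rw [hhh']
      _ = dist (h (γ t)) (γ t) := dist_comm _ _
      _ ≤ rh := hrh' t ht
  -- composite
  have hGi : Isometry (g ∘ h) := hgi.comp hhi
  have hrG : ∀ t, 0 ≤ t → dist ((g ∘ h) (γ t)) (γ t) ≤ rh + rg := by
    intro t ht
    calc dist (g (h (γ t))) (γ t)
        ≤ dist (g (h (γ t))) (g (γ t)) + dist (g (γ t)) (γ t) := dist_triangle _ _ _
      _ = dist (h (γ t)) (γ t) + dist (g (γ t)) (γ t) := by rw [hgi.dist_eq]
      _ ≤ rh + rg := add_le_add (hrh' t ht) (hrg' t ht)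
  have hGG' : ∀ x, (g ∘ h) (h' (g' x)) = x := by
    intro x
    show g (h (h' (g' x))) = x
    rw [hhh', hgg']
  -- asymptotic claim
  have hasym : AsymptoticRays ((g ∘ h) ∘ γ) γ := ⟨rh + rg, fun t ht => hrG t ht⟩
  refine ⟨hasym, ?_⟩
  -- χ values
  have bus0 : busemann γ (γ 0) = 0 := bus_gamma hγ le_rfl
  -- I1 : χ(h) + χ(g) ≤ χ(gh)
  have I1 := chi_super hγ hCN hgi hrg' (h (γ 0))
  -- I2 : χ(G') + χ(G) ≤ 0
  have I2 := chi_super hγ hCN hGi hrG (h' (g' (γ 0)))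
  rw [hGG', bus0] at I2
  -- I3 : 0 ≤ χ(G) + χ(G')
  have I3 := chi_inv hγ hgeo hCN hGi hGG' hrG
  -- I4 : χ(g') + χ(h') ≤ χ(h' (g' γ0))
  have I4 := chi_super hγ hCN hh'i hrhi (g' (γ 0))
  -- I5 : χ(g') + χ(g) ≤ 0 and 0 ≤ χ(g) + χ(g')
  have I5a := chi_super hγ hCN hgi hrg' (g' (γ 0))
  rw [hgg', bus0] at I5a
  have I5b := chi_inv hγ hgeo hCN hgi hgg' hrg'
  -- I6 : same for h
  have I6a := chi_super hγ hCN hhi hrh' (h' (γ 0))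
  rw [hhh', bus0] at I6a
  have I6b := chi_inv hγ hgeo hCN hhi hhh' hrh'
  show busemann γ (g (h (γ 0))) = busemann γ (g (γ 0)) + busemann γ (h (γ 0))
  have hI3' : 0 ≤ busemann γ ((g ∘ h) (γ 0)) + busemann γ (h' (g' (γ 0))) := I3
  have hI2' : busemann γ (h' (g' (γ 0))) + busemann γ ((g ∘ h) (γ 0)) ≤ 0 := I2
  have hGeq : busemann γ ((g ∘ h) (γ 0)) = busemann γ (g (h (γ 0))) := rfl
  rw [hGeq] at hI3' hI2'
  linarith [I1, I4, I5a, I5b, I6a, I6b, hI3', hI2']
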